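/- Let N ≥ 1 and let r be a real number with 1 < r < 2. Then there exists a constant C > 0 (depending only on r and N) such that for all X, Y ∈ ℝ^N not both zero and all real a, b > 0, setting Φ = (1 + (r−1)(b/a)^r) X − r (b/a)^{r−1} Y and Ψ = (1 + (r−1)(a/b)^r) Y − r (a/b)^{r−1} X, one has ‖X‖^{r−2}⟨X, Φ⟩ + ‖Y‖^{r−2}⟨Y, Ψ⟩ ≥ C (‖bX − aY‖² / (b‖X‖ + a‖Y‖)^{2−r}) (a^{−r} + b^{−r}), where ⟨·,·⟩ is the Euclidean inner product and ‖·‖ the Euclidean norm, with the convention that ‖v‖^{r−2}⟨v, w⟩ = 0 whenever v = 0. -/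

import Mathlib

open intervalIntegral MeasureTheory Real

lemma S1 (r : ℝ) (hr1 : 1 < r) (hr2 : r < 2) (u v : ℝ) (hu : 0 < u) (hv : 0 < v) :
    r*(r-1)/2 * ((u-v)^2 * (u+v)^(r-2)) ≤ u^r + (r-1)*v^r - r*v^(r-1)*u := by
  have h21 : (-1:ℝ) < r - 2 := by linarith
  have h11 : (-1:ℝ) < r - 1 := by linarith
  have hK : (0:ℝ) ≤ (u+v)^(r-2) := Real.rpow_nonneg (by linarith) _
  set K := (u+v)^(r-2) with hKdef
  have hiu : IntervalIntegrable (fun t : ℝ => u * t ^ (r-2) - t ^ (r-1)) volume v u :=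
    ((intervalIntegrable_rpow' h21).const_mul u).sub (intervalIntegrable_rpow' h11)
  have hiv : IntervalIntegrable (fun t : ℝ => t ^ (r-1) - u * t ^ (r-2)) volume u v :=
    (intervalIntegrable_rpow' h11).sub ((intervalIntegrable_rpow' h21).const_mul u)
  have e21 : r - 2 + 1 = r - 1 := by ring
  have e11 : r - 1 + 1 = r := by ring
  have huu : u * u ^ (r-1) = u ^ r := by
    rw [← e11, Real.rpow_add_one hu.ne']; ring
  rcases le_total v u with hvu | huv
  · have hpt : ∀ t ∈ Set.Icc v u, (u - t) * K ≤ u * t ^ (r-2) - t ^ (r-1) := by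
      intro t ht
      have h0 : 0 < t := lt_of_lt_of_le hv ht.1
      have h1 : K ≤ t ^ (r-2) :=
        Real.rpow_le_rpow_of_nonpos h0 (le_trans ht.2 (by linarith)) (by linarith)
      have h2 : t ^ (r-1) = t ^ (r-2) * t := by rw [← e21, Real.rpow_add_one h0.ne']
      rw [h2]
      nlinarith [sub_nonneg.2 ht.2, Real.rpow_nonneg h0.le (r-2)]
    have hmono := intervalIntegral.integral_mono_on hvu
      (((continuous_const.sub continuous_id).mul continuous_const).intervalIntegrable v u)
      hiu hpt
    simp only [Pi.mul_apply, Pi.sub_apply, id_eq, ← hKdef] at hmono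
    have eL : ∫ t in v..u, (u - t) * K = (u-v)^2/2 * K := by
      have : (fun t : ℝ => (u - t) * K) = fun t : ℝ => u*K - K*t := by funext t; ring
      rw [this, intervalIntegral.integral_sub intervalIntegrable_const
        (intervalIntegrable_id.const_mul K), intervalIntegral.integral_const,
        intervalIntegral.integral_const_mul, integral_id]
      simp only [smul_eq_mul]; ring
    have eR : ∫ t in v..u, (u * t ^ (r-2) - t ^ (r-1))
        = u * ((u^(r-1) - v^(r-1))/(r-1)) - (u^r - v^r)/r := by
      rw [intervalIntegral.integral_sub ((intervalIntegrable_rpow' h21).const_mul u)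
        (intervalIntegrable_rpow' h11), intervalIntegral.integral_const_mul,
        integral_rpow (Or.inl h21), integral_rpow (Or.inl h11), e21, e11]
    rw [eL, eR] at hmono
    have hr0 : (0:ℝ) < r := by linarith
    have hr10 : (0:ℝ) < r - 1 := by linarith
    have final : r*(r-1) * (u * ((u^(r-1) - v^(r-1))/(r-1)) - (u^r - v^r)/r)
        = u^r + (r-1)*v^r - r*v^(r-1)*u := by
      rw [← huu]; field_simp; ring
    nlinarith [mul_le_mul_of_nonneg_left hmono (by nlinarith : (0:ℝ) ≤ r*(r-1))]
  · have hpt : ∀ t ∈ Set.Icc u v, (t - u) * K ≤ t ^ (r-1) - u * t ^ (r-2) := by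
      intro t ht
      have h0 : 0 < t := lt_of_lt_of_le hu ht.1
      have h1 : K ≤ t ^ (r-2) :=
        Real.rpow_le_rpow_of_nonpos h0 (le_trans ht.2 (by linarith)) (by linarith)
      have h2 : t ^ (r-1) = t ^ (r-2) * t := by rw [← e21, Real.rpow_add_one h0.ne']
      rw [h2]
      nlinarith [sub_nonneg.2 ht.1, Real.rpow_nonneg h0.le (r-2)]
    have hmono := intervalIntegral.integral_mono_on huv
      (((continuous_id.sub continuous_const).mul continuous_const).intervalIntegrable u v)
      hiv hpt
    simp only [Pi.mul_apply, Pi.sub_apply, id_eq, ← hKdef] at hmono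
    have eL : ∫ t in u..v, (t - u) * K = (u-v)^2/2 * K := by
      have : (fun t : ℝ => (t - u) * K) = fun t : ℝ => K*t - u*K := by funext t; ring
      rw [this, intervalIntegral.integral_sub (intervalIntegrable_id.const_mul K)
        intervalIntegrable_const, intervalIntegral.integral_const,
        intervalIntegral.integral_const_mul, integral_id]
      simp only [smul_eq_mul]; ring
    have eR : ∫ t in u..v, (t ^ (r-1) - u * t ^ (r-2))
        = (v^r - u^r)/r - u * ((v^(r-1) - u^(r-1))/(r-1)) := by
      rw [intervalIntegral.integral_sub (intervalIntegrable_rpow' h11)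
        ((intervalIntegrable_rpow' h21).const_mul u), intervalIntegral.integral_const_mul,
        integral_rpow (Or.inl h21), integral_rpow (Or.inl h11), e21, e11]
    rw [eL, eR] at hmono
    have hr0 : (0:ℝ) < r := by linarith
    have hr10 : (0:ℝ) < r - 1 := by linarith
    have final : r*(r-1) * ((v^r - u^r)/r - u * ((v^(r-1) - u^(r-1))/(r-1)))
        = u^r + (r-1)*v^r - r*v^(r-1)*u := by
      rw [← huu]; field_simp; ring
    nlinarith [mul_le_mul_of_nonneg_left hmono (by nlinarith : (0:ℝ) ≤ r*(r-1))]

lemma pow2_rpow (r : ℝ) (hr1 : 1 < r) (hr2 : r < 2) {w : ℝ} (hw : 0 ≤ w) :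
    w ^ (2:ℕ) * w ^ (r-2) = w ^ r := by
  rcases hw.eq_or_lt with h|h
  · rw [← h]
    rw [Real.zero_rpow (by intro hc; linarith : r - 2 ≠ 0),
      Real.zero_rpow (by intro hc; linarith : r ≠ 0)]
    ring
  · rw [← Real.rpow_natCast w 2, ← Real.rpow_add h]
    norm_num

lemma S2 (r : ℝ) (hr1 : 1 < r) (hr2 : r < 2) (u v : ℝ) (hu : 0 ≤ u) (hv : 0 ≤ v) :
    (u+v)^r ≤ 4*(u^r + v^r) := by
  have hur : 0 ≤ u ^ r := Real.rpow_nonneg hu r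
  have hvr : 0 ≤ v ^ r := Real.rpow_nonneg hv r
  have h5 : (2:ℝ)^r ≤ 4 := by
    have h := Real.rpow_le_rpow_of_exponent_le (by norm_num : (1:ℝ) ≤ 2) hr2.le
    have h2 : (2:ℝ) ^ (2:ℝ) = 4 := by
      rw [show (2:ℝ) = ((2:ℕ):ℝ) by norm_num, Real.rpow_natCast]; norm_num
    linarith [h2 ▸ h]
  rcases le_total u v with h|h
  · have h2 : (u+v)^r ≤ (2*v)^r := Real.rpow_le_rpow (by linarith) (by linarith) (by linarith)
    have h3 : (2*v)^r = 2^r*v^r := Real.mul_rpow (by norm_num) hv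
    nlinarith
  · have h2 : (u+v)^r ≤ (2*u)^r := Real.rpow_le_rpow (by linarith) (by linarith) (by linarith)
    have h3 : (2*u)^r = 2^r*u^r := Real.mul_rpow (by norm_num) hu
    nlinarith

lemma lemC (r : ℝ) (hr1 : 1 < r) (hr2 : r < 2) (u v p : ℝ)
    (hu : 0 ≤ u) (hv : 0 ≤ v) (hp : |p| ≤ u*v) :
    (r-1)/4 * ((u^(2:ℕ) + v^(2:ℕ) - 2*p) * (u+v)^(r-2))
      ≤ u^r + (r-1)*v^r - r*v^(r-2)*p := by
  have habs := abs_le.1 hp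
  have hK : (0:ℝ) ≤ (u+v)^(r-2) := Real.rpow_nonneg (by linarith) _
  have hur : 0 ≤ u ^ r := Real.rpow_nonneg hu r
  have hvr : 0 ≤ v ^ r := Real.rpow_nonneg hv r
  rcases hv.eq_or_lt with rfl|hv0
  · have hp0 : p = 0 := by
      have h0 : |p| ≤ 0 := by simpa using hp
      simpa using le_antisymm h0 (abs_nonneg p)
    subst hp0
    have h1 := pow2_rpow r hr1 hr2 hu
    rw [Real.zero_rpow (show r ≠ 0 by intro hc; linarith),
        Real.zero_rpow (show r - 2 ≠ 0 by intro hc; linarith)]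
    norm_num
    nlinarith [h1]
  · rcases hu.eq_or_lt with rfl|hu0
    · have hp0 : p = 0 := by
        have h0 : |p| ≤ 0 := by simpa using hp
        simpa using le_antisymm h0 (abs_nonneg p)
      subst hp0
      have h1 := pow2_rpow r hr1 hr2 hv
      rw [Real.zero_rpow (show r ≠ 0 by intro hc; linarith)]
      norm_num
      nlinarith [h1]
    · -- main case u, v > 0
      have hv2 : v^(r-2)*v = v^(r-1) := by
        rw [← Real.rpow_add_one hv0.ne' (r-2)]; congr 1; ring
      have hS1 := S1 r hr1 hr2 u v hu0 hv0
      rw [← hv2] at hS1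
      have hS2' := S2 r hr1 hr2 u v hu hv
      have hsum : (u+v)^(2:ℕ) * (u+v)^(r-2) = (u+v)^r := pow2_rpow r hr1 hr2 (by linarith)
      have hvr2 : (0:ℝ) ≤ v^(r-2) := Real.rpow_nonneg hv _
      have huvr : (r-1)/4 * ((u+v)^(2:ℕ) * (u+v)^(r-2))
          ≤ u^r + (r-1)*v^r + r*(v^(r-2)*v)*u := by
        rw [hsum, hv2]
        have h1 : (r-1)/4 * (u+v)^r ≤ (r-1)/4 * (4*(u^r+v^r)) :=
          mul_le_mul_of_nonneg_left hS2' (by linarith)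
        have h2 : 0 ≤ r*v^(r-1)*u :=
          mul_nonneg (mul_nonneg (by linarith) (Real.rpow_nonneg hv _)) hu
        nlinarith
      set K := (u+v)^(r-2) with hKdef
      clear_value K
      set W := v^(r-2) with hWdef
      clear_value W
      set U := u^r with hUdef
      clear_value U
      set V := v^r with hVdef
      clear_value V
      have hc : (r-1)/4 ≤ r*(r-1)/2 := by nlinarith
      have hsq : (0:ℝ) ≤ (u-v)^2 * K := mul_nonneg (sq_nonneg _) hK
      have hcc := mul_le_mul_of_nonneg_right hc hsq
      rcases le_or_gt 0 (r*W - 2*((r-1)/4)*K) with hB|hB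
      · have key : 0 ≤ (u*v - p) * (r*W - 2*((r-1)/4)*K) :=
          mul_nonneg (by linarith) hB
        linarith [hS1, hcc, key]
      · have key : 0 ≤ (p + u*v) * (2*((r-1)/4)*K - r*W) :=
          mul_nonneg (by linarith) (by linarith)
        linarith [huvr, key]

lemma rpow_expand1 {a : ℝ} (ha : 0 < a) (r : ℝ) : a^(r-1) = a^(r-2)*a := by
  rw [← Real.rpow_add_one ha.ne' (r-2)]; congr 1; ring

lemma rpow_expand0 {a : ℝ} (ha : 0 < a) (r : ℝ) : a^r = a^(r-2)*a*a := by
  rw [← Real.rpow_add_one ha.ne' (r-2), ← Real.rpow_add_one ha.ne' (r-2+1)]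
  congr 1; ring

lemma idL (r : ℝ) (hr1 : 1 < r) (hr2 : r < 2) (u v p a b : ℝ)
    (hu : 0 ≤ u) (hv : 0 ≤ v) (ha : 0 < a) (hb : 0 < b) :
    u^(r-2) * ((1 + (r-1)*(b/a)^r) * u^(2:ℕ) - (r*(b/a)^(r-1)) * p)
      + v^(r-2) * ((1 + (r-1)*(a/b)^r) * v^(2:ℕ) - (r*(a/b)^(r-1)) * p)
    = a^r * ((u/a)^r + (r-1)*(v/b)^r - r*(v/b)^(r-2)*(p/(a*b)))
      + b^r * ((v/b)^r + (r-1)*(u/a)^r - r*(u/a)^(r-2)*(p/(a*b))) := by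
  have hu2 : u^r = u^(2:ℕ) * u^(r-2) := (pow2_rpow r hr1 hr2 hu).symm
  have hv2 : v^r = v^(2:ℕ) * v^(r-2) := (pow2_rpow r hr1 hr2 hv).symm
  simp only [Real.div_rpow hu ha.le, Real.div_rpow hv hb.le,
    Real.div_rpow hb.le ha.le, Real.div_rpow ha.le hb.le]
  rw [rpow_expand0 ha r, rpow_expand0 hb r, rpow_expand1 ha r, rpow_expand1 hb r, hu2, hv2]
  have h1 : a^(r-2) ≠ 0 := (Real.rpow_pos_of_pos ha _).ne'
  have h2 : b^(r-2) ≠ 0 := (Real.rpow_pos_of_pos hb _).ne'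
  field_simp
  ring

lemma idR (r : ℝ) (hr1 : 1 < r) (hr2 : r < 2) (u v a b W : ℝ)
    (hu : 0 ≤ u) (hv : 0 ≤ v) (ha : 0 < a) (hb : 0 < b) (hD : 0 < b*u + a*v) :
    a^r * ((r-1)/4 * ((W/(a*b))^(2:ℕ) * (u/a + v/b)^(r-2)))
      + b^r * ((r-1)/4 * ((W/(a*b))^(2:ℕ) * (v/b + u/a)^(r-2)))
    = (r-1)/4 * (W^(2:ℕ) / (b*u + a*v)^(2-r)) * (a^(-r) + b^(-r)) := by
  have hsum : u/a + v/b = (b*u + a*v)/(a*b) := by field_simp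
  rw [add_comm (v/b) (u/a), hsum, Real.div_rpow hD.le (by positivity : (0:ℝ) ≤ a*b)]
  have hDr : (b*u+a*v)^(2-r) = ((b*u+a*v)^(r-2))⁻¹ := by
    rw [show (2-r) = -(r-2) by ring, Real.rpow_neg hD.le]
  rw [hDr, Real.mul_rpow ha.le hb.le, Real.rpow_neg ha.le r, Real.rpow_neg hb.le r,
    rpow_expand0 ha r, rpow_expand0 hb r]
  have h1 : a^(r-2) ≠ 0 := (Real.rpow_pos_of_pos ha _).ne'
  have h2 : b^(r-2) ≠ 0 := (Real.rpow_pos_of_pos hb _).ne'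
  have h3 : (b*u+a*v)^(r-2) ≠ 0 := (Real.rpow_pos_of_pos hD _).ne'
  field_simp
  ring

lemma lemB {N : ℕ} (r : ℝ) (hr1 : 1 < r) (hr2 : r < 2)
    (ξ η : EuclideanSpace ℝ (Fin N)) :
    (r-1)/4 * (‖ξ - η‖^(2:ℕ) * (‖ξ‖+‖η‖)^(r-2))
      ≤ ‖ξ‖^r + (r-1)*‖η‖^r - r*‖η‖^(r-2)*(inner ℝ η ξ : ℝ) := by
  have hp : |(inner ℝ η ξ : ℝ)| ≤ ‖ξ‖ * ‖η‖ := by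
    rw [mul_comm]; exact abs_real_inner_le_norm η ξ
  have h := lemC r hr1 hr2 ‖ξ‖ ‖η‖ (inner ℝ η ξ : ℝ) (norm_nonneg _) (norm_nonneg _) hp
  have hn : ‖ξ - η‖^(2:ℕ) = ‖ξ‖^(2:ℕ) + ‖η‖^(2:ℕ) - 2*(inner ℝ η ξ : ℝ) := by
    rw [norm_sub_sq_real, real_inner_comm]; ring
  rw [hn]
  exact h

/-- Pointwise coercivity estimate in the Díaz–Saa argument, case `1 < r < 2`:
there is `C > 0` (depending only on `r` and `N`) such that for all
`X Y : ℝ^N` not both zero and all `a, b > 0`, with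
`Φ = (1 + (r−1)(b/a)^r) X − r (b/a)^{r−1} Y` and
`Ψ = (1 + (r−1)(a/b)^r) Y − r (a/b)^{r−1} X`, one has
`‖X‖^{r−2}⟨X, Φ⟩ + ‖Y‖^{r−2}⟨Y, Ψ⟩
  ≥ C (‖bX − aY‖² / (b‖X‖ + a‖Y‖)^{2−r}) (a^{−r} + b^{−r})`.
(The convention `‖v‖^{r−2}⟨v, w⟩ = 0` for `v = 0` is automatic, since
`(0:ℝ) ^ (r−2) = 0` by `Real.rpow` when `r < 2`.) -/
theorem diaz_saa_coercivity_lt_two (N : ℕ) (hN : 1 ≤ N) (r : ℝ)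
    (hr1 : 1 < r) (hr2 : r < 2) :
    ∃ C : ℝ, 0 < C ∧ ∀ X Y : EuclideanSpace ℝ (Fin N), ¬(X = 0 ∧ Y = 0) →
      ∀ a b : ℝ, 0 < a → 0 < b →
      ‖X‖ ^ (r - 2) *
          (inner ℝ X ((1 + (r - 1) * (b / a) ^ r) • X - (r * (b / a) ^ (r - 1)) • Y) : ℝ) +
        ‖Y‖ ^ (r - 2) *
          (inner ℝ Y ((1 + (r - 1) * (a / b) ^ r) • Y - (r * (a / b) ^ (r - 1)) • X) : ℝ) ≥
      C * (‖b • X - a • Y‖ ^ 2 / (b * ‖X‖ + a * ‖Y‖) ^ (2 - r)) *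
        (a ^ (-r) + b ^ (-r)) := by
  refine ⟨(r-1)/4, by linarith, ?_⟩
  intro X Y hXY a b ha hb
  have hD : 0 < b * ‖X‖ + a * ‖Y‖ := by
    rcases not_and_or.1 hXY with h | h
    · have : 0 < ‖X‖ := norm_pos_iff.2 h
      have : 0 ≤ a * ‖Y‖ := by positivity
      nlinarith
    · have : 0 < ‖Y‖ := norm_pos_iff.2 h
      have : 0 ≤ b * ‖X‖ := by positivity
      nlinarith
  have e1 : (inner ℝ X ((1 + (r - 1) * (b / a) ^ r) • X - (r * (b / a) ^ (r - 1)) • Y) : ℝ)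
      = (1 + (r-1)*(b/a)^r) * ‖X‖^(2:ℕ) - (r*(b/a)^(r-1)) * (inner ℝ X Y : ℝ) := by
    rw [inner_sub_right, real_inner_smul_right, real_inner_smul_right,
      real_inner_self_eq_norm_sq]
  have e2 : (inner ℝ Y ((1 + (r - 1) * (a / b) ^ r) • Y - (r * (a / b) ^ (r - 1)) • X) : ℝ)
      = (1 + (r-1)*(a/b)^r) * ‖Y‖^(2:ℕ) - (r*(a/b)^(r-1)) * (inner ℝ X Y : ℝ) := by
    rw [inner_sub_right, real_inner_smul_right, real_inner_smul_right,
      real_inner_self_eq_norm_sq, real_inner_comm]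
  rw [ge_iff_le, e1, e2]
  -- scaled vectors
  have hnX : ‖a⁻¹ • X‖ = ‖X‖/a := by
    rw [norm_smul, norm_inv, Real.norm_eq_abs, abs_of_pos ha]; ring
  have hnY : ‖b⁻¹ • Y‖ = ‖Y‖/b := by
    rw [norm_smul, norm_inv, Real.norm_eq_abs, abs_of_pos hb]; ring
  have hker : (inner ℝ (b⁻¹ • Y) (a⁻¹ • X) : ℝ) = (inner ℝ X Y : ℝ)/(a*b) := by
    rw [real_inner_smul_left, real_inner_smul_right, real_inner_comm]; ring
  have hker2 : (inner ℝ (a⁻¹ • X) (b⁻¹ • Y) : ℝ) = (inner ℝ X Y : ℝ)/(a*b) := by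
    rw [real_inner_smul_left, real_inner_smul_right]; ring
  have hdv : a⁻¹ • X - b⁻¹ • Y = ((a*b)⁻¹) • (b • X - a • Y) := by
    rw [smul_sub, smul_smul, smul_smul]
    congr 1
    · congr 1; field_simp <;> ring
    · congr 1; field_simp <;> ring
  have hdiff : ‖a⁻¹ • X - b⁻¹ • Y‖ = ‖b • X - a • Y‖/(a*b) := by
    rw [hdv, norm_smul, norm_inv, Real.norm_eq_abs, abs_of_pos (by positivity : (0:ℝ) < a*b)]
    ring
  have hdiff2 : ‖b⁻¹ • Y - a⁻¹ • X‖ = ‖b • X - a • Y‖/(a*b) := by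
    rw [norm_sub_rev]; exact hdiff
  have h1 := lemB r hr1 hr2 (a⁻¹ • X) (b⁻¹ • Y)
  rw [hdiff, hnX, hnY, hker] at h1
  have h2 := lemB r hr1 hr2 (b⁻¹ • Y) (a⁻¹ • X)
  rw [hdiff2, hnX, hnY, hker2] at h2
  have m1 := mul_le_mul_of_nonneg_left h1 (Real.rpow_nonneg ha.le r)
  have m2 := mul_le_mul_of_nonneg_left h2 (Real.rpow_nonneg hb.le r)
  have hL := idL r hr1 hr2 ‖X‖ ‖Y‖ (inner ℝ X Y : ℝ) a b (norm_nonneg _) (norm_nonneg _) ha hb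
  have hR := idR r hr1 hr2 ‖X‖ ‖Y‖ a b ‖b • X - a • Y‖ (norm_nonneg _) (norm_nonneg _) ha hb hD
  linarith [m1, m2, hL, hR]
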